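/- arXiv:2410.10304 — 3 statements merged into one kernel-verified Lean document; each statement's English description precedes it below -/
import Mathlib

section
/- Let n ≥ 1, δ ∈ (0,1], θ ∈ (0,δ], γ := δ/(2(2n+δ)), and c > 0. Let F₁, F₂, F₃ : [0,∞) → [0,∞) be bounded with F₁ non-decreasing and F₂, F₃ non-increasing. Let I, J, K, Q ⊂ ℝ^n be cubes with ℓ(K) ≤ 2ℓ(J) and I ∪ J ∪ K ⊂ Q, and suppose max{d(K,I), d(K,J)} > 2 ℓ(K)^γ ℓ(J)^{1−γ} and max{d(K,I), d(K,J)} ≥ c ℓ(K)^γ ℓ(Q)^{1−γ}. Then ∫_J ∫_I ∫_K F₁(|x−c_K|) F₂(|x−y|+|x−z|) F₃(1 + (|x+y|+|x+z|)/(1+|x−y|+|x−z|)) · ℓ(K)^δ / (|x−y|+|x−z|)^{2n+δ} dx dy dz ≤ C (ℓ(K)/ℓ(Q))^{δ/2} F₁(ℓ(K)) F̃₂(ℓ(K)) F̃₃(Q) |I||J||K| / |Q|², where the integral is with respect to Lebesgue measure in x ∈ K, y ∈ I, z ∈ J, and C depends only on n, δ, θ and c. -/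
open MeasureTheory Set
open scoped ENNReal NNReal

noncomputable section

abbrev Rn (n : ℕ) := Fin n → ℝ

/-- A (half-open, axis-parallel) cube in `ℝⁿ` (with the `ℓ^∞` metric),
given by its lower-left corner and its (positive) sidelength. -/
structure Cube (n : ℕ) where
  corner : Fin n → ℝ
  len : ℝ
  len_pos : 0 < len

namespace Cube

/-- The underlying set `∏_i [aᵢ, aᵢ + ℓ)` of a cube. -/
def toSet {n : ℕ} (I : Cube n) : Set (Rn n) :=
  {x | ∀ i, I.corner i ≤ x i ∧ x i < I.corner i + I.len}

/-- The center of a cube. -/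
def center {n : ℕ} (I : Cube n) : Rn n := fun i => I.corner i + I.len / 2

/-- `λI`: the cube with the same center and sidelength `λ ℓ(I)`. -/
def dilate {n : ℕ} (I : Cube n) (lam : ℝ) (hlam : 0 < lam) : Cube n :=
  ⟨fun i => I.center i - lam * I.len / 2, lam * I.len, mul_pos hlam I.len_pos⟩

end Cube

/-- The unit cube `𝕀 = [-1/2, 1/2)^n`. -/
def unitCube (n : ℕ) : Cube n := ⟨fun _ => -(1 / 2 : ℝ), 1, one_pos⟩

/-- The distance `d(E, F) = inf {|x - y| : x ∈ E, y ∈ F}` between two sets. -/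
def sDist {α : Type*} [PseudoMetricSpace α] (E F : Set α) : ℝ :=
  sInf ((fun q : α × α => dist q.1 q.2) '' (E ×ˢ F))

/-- The relative distance `rd(I, J) = d(I, J) / max{ℓ(I), ℓ(J)}` between two cubes. -/
def relDist {n : ℕ} (I J : Cube n) : ℝ :=
  sDist I.toSet J.toSet / max I.len J.len

/-- `F̃₂(t) = Σ_{k=0}^∞ 2^{-kθ} F₂(2^{-k} t)`. -/
def Ft2 (θ : ℝ) (F₂ : ℝ → ℝ) (t : ℝ) : ℝ :=
  ∑' k : ℕ, (2 : ℝ) ^ (-(k : ℝ) * θ) * F₂ ((2 : ℝ) ^ (-(k : ℝ)) * t)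

/-- `F̃₃(Q) = Σ_{k=0}^∞ 2^{-kθ} F₃(rd(2^k Q, 𝕀))`. -/
def Ft3 {n : ℕ} (θ : ℝ) (F₃ : ℝ → ℝ) (Q : Cube n) : ℝ :=
  ∑' k : ℕ, (2 : ℝ) ^ (-(k : ℝ) * θ) *
    F₃ (relDist (Q.dilate ((2 : ℝ) ^ k) (by positivity)) (unitCube n))

-- Auxiliary lemmas

namespace Cube

lemma toSet_eq_pi {n : ℕ} (I : Cube n) :
    I.toSet = Set.pi Set.univ (fun i => Set.Ico (I.corner i) (I.corner i + I.len)) := by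
  ext x; simp [toSet, Set.mem_pi, Set.mem_Ico]

lemma volume_toSet {n : ℕ} (I : Cube n) : volume I.toSet = ENNReal.ofReal (I.len ^ n) := by
  rw [toSet_eq_pi, volume_pi_pi]
  simp [Real.volume_Ico, ENNReal.ofReal_pow I.len_pos.le]

lemma norm_sub_center_le {n : ℕ} {I : Cube n} {x : Rn n} (hx : x ∈ I.toSet) :
    ‖x - I.center‖ ≤ I.len / 2 := by
  rw [pi_norm_le_iff_of_nonneg (by linarith [I.len_pos])]
  intro i
  have h := hx i
  rw [Pi.sub_apply, Real.norm_eq_abs, abs_le]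
  constructor <;> simp only [center] <;> [linarith [h.1]; linarith [h.2]]

lemma dist_le_len {n : ℕ} {I : Cube n} {x y : Rn n} (hx : x ∈ I.toSet) (hy : y ∈ I.toSet) :
    dist x y ≤ I.len := by
  rw [dist_pi_le_iff I.len_pos.le]
  intro i
  have h1 := hx i; have h2 := hy i
  rw [Real.dist_eq, abs_le]
  constructor <;> linarith [h1.1, h1.2, h2.1, h2.2]

lemma center_mem_dilate {n : ℕ} (I : Cube n) (lam : ℝ) (hlam : 0 < lam) :
    I.center ∈ (I.dilate lam hlam).toSet := by
  intro i
  have := mul_pos hlam I.len_pos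
  constructor <;> simp only [dilate] <;> linarith

end Cube

lemma sDist_nonneg' {α : Type*} [PseudoMetricSpace α] (E F : Set α) : 0 ≤ sDist E F :=
  Real.sInf_nonneg (fun x hx => by obtain ⟨q, _, rfl⟩ := hx; exact dist_nonneg)

lemma sDist_le {α : Type*} [PseudoMetricSpace α] {E F : Set α} {x y : α}
    (hx : x ∈ E) (hy : y ∈ F) : sDist E F ≤ dist x y :=
  csInf_le ⟨0, fun z hz => by obtain ⟨q, _, rfl⟩ := hz; exact dist_nonneg⟩
    ⟨(x, y), ⟨hx, hy⟩, rfl⟩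

lemma term_le_tsum (θ : ℝ) (hθ : 0 < θ) (g : ℕ → ℝ) (hg0 : ∀ k, 0 ≤ g k)
    (M : ℝ) (hgM : ∀ k, g k ≤ M) (k : ℕ) :
    (2:ℝ) ^ (-(k:ℝ) * θ) * g k ≤ ∑' k : ℕ, (2:ℝ) ^ (-(k:ℝ) * θ) * g k := by
  have hr0 : (0:ℝ) ≤ 2 ^ (-θ) := Real.rpow_nonneg (by norm_num) _
  have hr1 : (2:ℝ) ^ (-θ) < 1 := by
    have := Real.rpow_lt_rpow_of_exponent_lt (show (1:ℝ) < 2 by norm_num)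
      (show -θ < 0 by linarith)
    simpa using this
  have hkey : ∀ m : ℕ, (2:ℝ) ^ (-(m:ℝ) * θ) = ((2:ℝ) ^ (-θ)) ^ m := by
    intro m
    rw [← Real.rpow_natCast ((2:ℝ) ^ (-θ)) m, ← Real.rpow_mul (by norm_num)]
    ring_nf
  have hsum : Summable (fun k : ℕ => (2:ℝ) ^ (-(k:ℝ) * θ) * g k) := by
    refine Summable.of_nonneg_of_le
      (fun k => mul_nonneg (Real.rpow_nonneg (by norm_num) _) (hg0 k)) (fun k => ?_)
      ((summable_geometric_of_lt_one hr0 hr1).mul_right M)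
    rw [hkey k]
    exact mul_le_mul_of_nonneg_left (hgM k) (pow_nonneg hr0 k)
  exact Summable.le_tsum hsum k fun j _ => mul_nonneg (Real.rpow_nonneg (by norm_num) _) (hg0 j)

set_option maxHeartbeats 2000000 in
/-- the separated-cubes integral estimate, Lemma `𝒫`. -/
theorem separated_integral_estimate
    (n : ℕ) (hn : 1 ≤ n) (δ θ c : ℝ)
    (hδ0 : 0 < δ) (hδ1 : δ ≤ 1) (hθ0 : 0 < θ) (hθδ : θ ≤ δ) (hc : 0 < c) :
    ∃ C : ℝ, 0 < C ∧
      ∀ F₁ F₂ F₃ : ℝ → ℝ,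
        (∀ t, 0 ≤ F₁ t) → (∀ t, 0 ≤ F₂ t) → (∀ t, 0 ≤ F₃ t) →
        BddAbove (Set.range F₁) → BddAbove (Set.range F₂) → BddAbove (Set.range F₃) →
        MonotoneOn F₁ (Set.Ici 0) → AntitoneOn F₂ (Set.Ici 0) → AntitoneOn F₃ (Set.Ici 0) →
        ∀ I J K Q : Cube n,
          K.len ≤ 2 * J.len →
          I.toSet ∪ J.toSet ∪ K.toSet ⊆ Q.toSet →
          2 * K.len ^ (δ / (2 * (2 * (n : ℝ) + δ))) *
              J.len ^ (1 - δ / (2 * (2 * (n : ℝ) + δ))) <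
            max (sDist K.toSet I.toSet) (sDist K.toSet J.toSet) →
          c * K.len ^ (δ / (2 * (2 * (n : ℝ) + δ))) *
              Q.len ^ (1 - δ / (2 * (2 * (n : ℝ) + δ))) ≤
            max (sDist K.toSet I.toSet) (sDist K.toSet J.toSet) →
          (∫⁻ z in J.toSet, ∫⁻ y in I.toSet, ∫⁻ x in K.toSet,
              ENNReal.ofReal
                (F₁ (dist x K.center) * F₂ (dist x y + dist x z) *
                  F₃ (1 + (‖x + y‖ + ‖x + z‖) / (1 + dist x y + dist x z)) *
                  K.len ^ δ / (dist x y + dist x z) ^ (2 * (n : ℝ) + δ))) ≤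
            ENNReal.ofReal
              (C * (K.len / Q.len) ^ (δ / 2) * F₁ K.len * Ft2 θ F₂ K.len * Ft3 θ F₃ Q *
                ((volume I.toSet).toReal * (volume J.toSet).toReal *
                  (volume K.toSet).toReal) / (volume Q.toSet).toReal ^ 2) := by
  have hn' : (1:ℝ) ≤ n := by exact_mod_cast hn
  set p : ℝ := 2 * (n : ℝ) + δ with hpdef
  have hp0 : 0 < p := by rw [hpdef]; linarith
  set γ : ℝ := δ / (2 * p) with hγdef
  have hγ0 : 0 < γ := div_pos hδ0 (by linarith)
  have hγ1 : γ ≤ 1 := by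
    rw [hγdef, div_le_one (by linarith)]
    rw [hpdef]; linarith
  refine ⟨2 * (c ^ p)⁻¹, by positivity, ?_⟩
  intro F₁ F₂ F₃ hF₁0 hF₂0 hF₃0 hB₁ hB₂ hB₃ hM₁ hA₂ hA₃ I J K Q hKJ hsub hsep hsepQ
  have hK0 : 0 < K.len := K.len_pos
  have hJ0 : 0 < J.len := J.len_pos
  have hQ0 : 0 < Q.len := Q.len_pos
  set D := max (sDist K.toSet I.toSet) (sDist K.toSet J.toSet) with hDdef
  have hKD : K.len < D := by
    have e1 : K.len ^ γ * K.len ^ (1 - γ) = K.len := by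
      rw [← Real.rpow_add hK0]; norm_num
    have e2 : K.len ^ (1-γ) ≤ (2 * J.len) ^ (1-γ) :=
      Real.rpow_le_rpow hK0.le hKJ (by linarith)
    have e3 : ((2:ℝ) * J.len) ^ (1-γ) = 2 ^ (1-γ) * J.len ^ (1-γ) :=
      Real.mul_rpow (by norm_num) hJ0.le
    have e4 : (2:ℝ) ^ (1-γ) ≤ 2 := by
      calc (2:ℝ) ^ (1-γ) ≤ 2 ^ (1:ℝ) :=
            Real.rpow_le_rpow_of_exponent_le one_le_two (by linarith)
        _ = 2 := Real.rpow_one 2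
    have hKγ : 0 < K.len ^ γ := Real.rpow_pos_of_pos hK0 _
    have hJγ : 0 < J.len ^ (1-γ) := Real.rpow_pos_of_pos hJ0 _
    calc K.len = K.len ^ γ * K.len ^ (1-γ) := e1.symm
      _ ≤ K.len ^ γ * (2 ^ (1-γ) * J.len ^ (1-γ)) := by
          rw [← e3]; exact mul_le_mul_of_nonneg_left e2 hKγ.le
      _ ≤ K.len ^ γ * (2 * J.len ^ (1-γ)) :=
          mul_le_mul_of_nonneg_left (mul_le_mul_of_nonneg_right e4 hJγ.le) hKγ.le
      _ = 2 * K.len ^ γ * J.len ^ (1-γ) := by ring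
      _ < D := hsep
  have hD0 : 0 < D := hK0.trans hKD
  obtain ⟨M₂, hM₂⟩ := hB₂
  obtain ⟨M₃, hM₃⟩ := hB₃
  have hM₂' : ∀ t, F₂ t ≤ M₂ := fun t => hM₂ ⟨t, rfl⟩
  have hM₃' : ∀ t, F₃ t ≤ M₃ := fun t => hM₃ ⟨t, rfl⟩
  have hF1nn : 0 ≤ F₁ K.len := hF₁0 _
  have hP2nn : 0 ≤ Ft2 θ F₂ K.len :=
    tsum_nonneg (fun k => mul_nonneg (Real.rpow_nonneg (by norm_num) _) (hF₂0 _))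
  have hP3nn : 0 ≤ Ft3 θ F₃ Q :=
    tsum_nonneg (fun k => mul_nonneg (Real.rpow_nonneg (by norm_num) _) (hF₃0 _))
  set B : ℝ := 2 * (c ^ p)⁻¹ * (K.len / Q.len) ^ (δ / 2) * F₁ K.len * Ft2 θ F₂ K.len *
      Ft3 θ F₃ Q / ((Q.len ^ n : ℝ))^2 with hBdef
  have hBnn : 0 ≤ B := by
    rw [hBdef]
    apply div_nonneg _ (by positivity)
    have h1 : (0:ℝ) ≤ 2 * (c ^ p)⁻¹ * (K.len / Q.len) ^ (δ / 2) := by positivity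
    exact mul_nonneg (mul_nonneg (mul_nonneg h1 hF1nn) hP2nn) hP3nn
  -- pointwise bound
  have key : ∀ z ∈ J.toSet, ∀ y ∈ I.toSet, ∀ x ∈ K.toSet,
      F₁ (dist x K.center) * F₂ (dist x y + dist x z) *
        F₃ (1 + (‖x + y‖ + ‖x + z‖) / (1 + dist x y + dist x z)) *
        K.len ^ δ / (dist x y + dist x z) ^ p ≤ B := by
    intro z hz y hy x hx
    have hxQ : x ∈ Q.toSet := hsub (Or.inr hx)
    have hyQ : y ∈ Q.toSet := hsub (Or.inl (Or.inl hy))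
    have hzQ : z ∈ Q.toSet := hsub (Or.inl (Or.inr hz))
    have hdsD : D ≤ dist x y + dist x z := by
      apply max_le
      · exact le_trans (sDist_le hx hy) (le_add_of_nonneg_right dist_nonneg)
      · exact le_trans (sDist_le hx hz) (le_add_of_nonneg_left dist_nonneg)
    have hds0 : 0 < dist x y + dist x z := lt_of_lt_of_le (hK0.trans hKD) hdsD
    -- F₁ bound
    have h1 : F₁ (dist x K.center) ≤ F₁ K.len := by
      apply hM₁ (mem_Ici.mpr dist_nonneg) (mem_Ici.mpr hK0.le)
      calc dist x K.center = ‖x - K.center‖ := dist_eq_norm _ _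
        _ ≤ K.len / 2 := Cube.norm_sub_center_le hx
        _ ≤ K.len := by linarith
    -- F₂ bound
    have h2 : F₂ (dist x y + dist x z) ≤ Ft2 θ F₂ K.len := by
      have h2a : F₂ (dist x y + dist x z) ≤ F₂ K.len :=
        hA₂ (mem_Ici.mpr hK0.le) (mem_Ici.mpr hds0.le) (le_trans hKD.le hdsD)
      have h2b := term_le_tsum θ hθ0 (fun k => F₂ ((2:ℝ) ^ (-(k:ℝ)) * K.len))
        (fun k => hF₂0 _) M₂ (fun k => hM₂' _) 0
      simp only [Nat.cast_zero, neg_zero, zero_mul, Real.rpow_zero, one_mul] at h2b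
      exact le_trans h2a h2b
    -- F₃ bound
    have h3 : F₃ (1 + (‖x + y‖ + ‖x + z‖) / (1 + dist x y + dist x z)) ≤
        2 * Ft3 θ F₃ Q := by
      have hlam : (0:ℝ) < 2 ^ (1:ℕ) := by norm_num
      have h3b := term_le_tsum θ hθ0
        (fun k => F₃ (relDist (Q.dilate ((2:ℝ) ^ k) (by positivity)) (unitCube n)))
        (fun k => hF₃0 _) M₃ (fun k => hM₃' _) 1
      have e : -((1:ℕ):ℝ) * θ = -θ := by norm_num
      rw [e] at h3b
      have h3c : (2:ℝ) ^ (-θ) *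
          F₃ (relDist (Q.dilate ((2:ℝ) ^ (1:ℕ)) hlam) (unitCube n)) ≤ Ft3 θ F₃ Q := h3b
      set rr := relDist (Q.dilate ((2:ℝ) ^ (1:ℕ)) hlam) (unitCube n) with hrr
      have hm0 : (0:ℝ) < max ((2:ℝ) ^ (1:ℕ) * Q.len) 1 := lt_of_lt_of_le one_pos (le_max_right _ _)
      have hrr_eq : rr = sDist (Q.dilate ((2:ℝ) ^ (1:ℕ)) hlam).toSet (unitCube n).toSet /
          max ((2:ℝ) ^ (1:ℕ) * Q.len) 1 := rfl
      have hrr0 : 0 ≤ rr := by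
        rw [hrr_eq]; exact div_nonneg (sDist_nonneg' _ _) hm0.le
      -- geometry: rr ≤ arg
      have hden1 : (1:ℝ) ≤ 1 + dist x y + dist x z := by
        have := dist_nonneg (x := x) (y := y); have := dist_nonneg (x := x) (y := z); linarith
      have hdenQ : 1 + dist x y + dist x z ≤ 1 + 2 * Q.len := by
        have := Cube.dist_le_len hxQ hyQ
        have := Cube.dist_le_len hxQ hzQ
        linarith
      have hN0 : (0:ℝ) ≤ ‖x + y‖ + ‖x + z‖ := add_nonneg (norm_nonneg _) (norm_nonneg _)
      have hlow : ∀ u v : Rn n, u ∈ Q.toSet → v ∈ Q.toSet →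
          2 * ‖Q.center‖ - Q.len ≤ ‖u + v‖ := by
        intro u v hu hv
        have ha : ‖Q.center + Q.center‖ - ‖u + v‖ ≤ ‖(Q.center + Q.center) - (u + v)‖ :=
          norm_sub_norm_le _ _
        have hb : (Q.center + Q.center) - (u + v) = (Q.center - u) + (Q.center - v) := by abel
        have hcn : ‖(Q.center - u) + (Q.center - v)‖ ≤ ‖Q.center - u‖ + ‖Q.center - v‖ :=
          norm_add_le _ _
        have hd1 : ‖Q.center - u‖ ≤ Q.len / 2 := by
          rw [norm_sub_rev]; exact Cube.norm_sub_center_le hu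
        have hd2 : ‖Q.center - v‖ ≤ Q.len / 2 := by
          rw [norm_sub_rev]; exact Cube.norm_sub_center_le hv
        have he : ‖Q.center + Q.center‖ = 2 * ‖Q.center‖ := by
          have h2s : Q.center + Q.center = (2:ℝ) • Q.center := (two_smul ℝ Q.center).symm
          rw [h2s, norm_smul]; simp
        rw [hb] at ha; linarith
      have hNlow : 4 * ‖Q.center‖ - 2 * Q.len ≤ ‖x + y‖ + ‖x + z‖ := by
        have := hlow x y hxQ hyQ; have := hlow x z hxQ hzQ; linarith
      have hrle : rr ≤ ‖Q.center‖ / max ((2:ℝ) ^ (1:ℕ) * Q.len) 1 := by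
        rw [hrr_eq]
        have hsd : sDist (Q.dilate ((2:ℝ) ^ (1:ℕ)) hlam).toSet (unitCube n).toSet ≤
            ‖Q.center‖ := by
          have h0mem : (0 : Rn n) ∈ (unitCube n).toSet := by
            intro i
            constructor <;> norm_num [unitCube]
          have hh := sDist_le (Cube.center_mem_dilate Q _ hlam) h0mem
          simpa using hh
        gcongr
      have hargle : ‖Q.center‖ / max ((2:ℝ) ^ (1:ℕ) * Q.len) 1 ≤
          1 + (‖x + y‖ + ‖x + z‖) / (1 + dist x y + dist x z) := by
        set m := max ((2:ℝ) ^ (1:ℕ) * Q.len) 1 with hmdef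
        have hm1 : (1:ℝ) ≤ m := le_max_right _ _
        have hm2 : 2 * Q.len ≤ m := by
          have h := le_max_left ((2:ℝ) ^ (1:ℕ) * Q.len) 1
          rw [← hmdef] at h
          norm_num at h
          linarith
        have hdiv0 : 0 ≤ (‖x + y‖ + ‖x + z‖) / (1 + dist x y + dist x z) :=
          div_nonneg hN0 (by linarith)
        rcases le_or_gt ‖Q.center‖ m with h | h
        · have : ‖Q.center‖ / m ≤ 1 := (div_le_one hm0).mpr h
          linarith
        · have hc3 : 3 * ‖Q.center‖ ≤ ‖x + y‖ + ‖x + z‖ := by linarith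
          have hkey2 : ‖Q.center‖ / m ≤
              (‖x + y‖ + ‖x + z‖) / (1 + dist x y + dist x z) := by
            rw [div_le_div_iff₀ hm0 (by linarith : (0:ℝ) < 1 + dist x y + dist x z)]
            nlinarith [norm_nonneg Q.center,
              mul_le_mul_of_nonneg_left hdenQ (norm_nonneg Q.center),
              mul_le_mul_of_nonneg_right hc3 hm0.le,
              mul_nonneg (norm_nonneg Q.center) hm0.le]
          linarith
      have harg0 : (0:ℝ) ≤ 1 + (‖x + y‖ + ‖x + z‖) / (1 + dist x y + dist x z) := by
        have : 0 ≤ (‖x + y‖ + ‖x + z‖) / (1 + dist x y + dist x z) :=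
          div_nonneg hN0 (by linarith)
        linarith
      have h3a : F₃ (1 + (‖x + y‖ + ‖x + z‖) / (1 + dist x y + dist x z)) ≤ F₃ rr :=
        hA₃ (mem_Ici.mpr hrr0) (mem_Ici.mpr harg0) (le_trans hrle hargle)
      have h2inv : (1/2 : ℝ) ≤ (2:ℝ) ^ (-θ) := by
        have h := Real.rpow_le_rpow_of_exponent_le one_le_two
          (show (-1:ℝ) ≤ -θ by linarith)
        rw [Real.rpow_neg_one] at h
        norm_num at h
        linarith
      have hhalf : (1/2:ℝ) * F₃ rr ≤ (2:ℝ) ^ (-θ) * F₃ rr :=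
        mul_le_mul_of_nonneg_right h2inv (hF₃0 _)
      have hfrr := hF₃0 rr
      calc F₃ (1 + (‖x + y‖ + ‖x + z‖) / (1 + dist x y + dist x z)) ≤ F₃ rr := h3a
        _ ≤ 2 * Ft3 θ F₃ Q := by linarith
    -- power bound
    have hpow : K.len ^ δ / (dist x y + dist x z) ^ p ≤
        (c ^ p)⁻¹ * (K.len / Q.len) ^ (δ/2) / ((Q.len ^ n : ℝ))^2 := by
      have hKγ : 0 < K.len ^ γ := Real.rpow_pos_of_pos hK0 _
      have hQγ : 0 < Q.len ^ (1-γ) := Real.rpow_pos_of_pos hQ0 _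
      have hbase : 0 < c * K.len ^ γ * Q.len ^ (1-γ) := mul_pos (mul_pos hc hKγ) hQγ
      have hds_ge : c * K.len ^ γ * Q.len ^ (1-γ) ≤ dist x y + dist x z :=
        le_trans hsepQ hdsD
      have h5 : (c * K.len ^ γ * Q.len ^ (1-γ)) ^ p ≤ (dist x y + dist x z) ^ p :=
        Real.rpow_le_rpow hbase.le hds_ge hp0.le
      have hγp : γ * p = δ / 2 := by
        rw [hγdef]
        field_simp
      have hγp' : (1 - γ) * p = p - δ/2 := by rw [sub_mul, one_mul, hγp]
      have h6 : (c * K.len ^ γ * Q.len ^ (1-γ)) ^ p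
          = c ^ p * K.len ^ (δ/2) * Q.len ^ (p - δ/2) := by
        rw [Real.mul_rpow (mul_pos hc hKγ).le hQγ.le, Real.mul_rpow hc.le hKγ.le,
          ← Real.rpow_mul hK0.le, ← Real.rpow_mul hQ0.le, hγp, hγp']
      have hcp : 0 < c ^ p := Real.rpow_pos_of_pos hc _
      have hK2 : 0 < K.len ^ (δ/2) := Real.rpow_pos_of_pos hK0 _
      have hQ2 : 0 < Q.len ^ (p - δ/2) := Real.rpow_pos_of_pos hQ0 _
      have hQ3 : 0 < Q.len ^ (δ/2) := Real.rpow_pos_of_pos hQ0 _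
      have hQn : 0 < (Q.len ^ n : ℝ) := pow_pos hQ0 n
      have hdenpos : 0 < c ^ p * K.len ^ (δ/2) * Q.len ^ (p - δ/2) :=
        mul_pos (mul_pos hcp hK2) hQ2
      have h7 : K.len ^ δ / (dist x y + dist x z) ^ p ≤
          K.len ^ δ / (c ^ p * K.len ^ (δ/2) * Q.len ^ (p - δ/2)) := by
        apply div_le_div_of_nonneg_left (Real.rpow_nonneg hK0.le _) hdenpos
        rw [← h6]; exact h5
      refine le_trans h7 (le_of_eq ?_)
      have e1 : K.len ^ δ = K.len ^ (δ/2) * K.len ^ (δ/2) := by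
        rw [← Real.rpow_add hK0]
        norm_num
      have e2 : Q.len ^ (p - δ/2) = Q.len ^ ((n:ℝ)*2) * Q.len ^ (δ/2) := by
        rw [← Real.rpow_add hQ0]
        congr 1
        rw [hpdef]; ring
      have e3 : Q.len ^ ((n:ℝ)*2) = ((Q.len ^ n : ℝ))^2 := by
        rw [Real.rpow_mul hQ0.le, Real.rpow_natCast,
          show (2:ℝ) = ((2:ℕ):ℝ) by norm_num, Real.rpow_natCast]
      rw [e1, e2, e3, Real.div_rpow hK0.le hQ0.le]
      field_simp
    -- combine
    have hq : 0 ≤ K.len ^ δ / (dist x y + dist x z) ^ p :=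
      div_nonneg (Real.rpow_nonneg hK0.le _) (Real.rpow_nonneg hds0.le _)
    calc F₁ (dist x K.center) * F₂ (dist x y + dist x z) *
          F₃ (1 + (‖x + y‖ + ‖x + z‖) / (1 + dist x y + dist x z)) *
          K.len ^ δ / (dist x y + dist x z) ^ p
        = (F₁ (dist x K.center) * F₂ (dist x y + dist x z) *
            F₃ (1 + (‖x + y‖ + ‖x + z‖) / (1 + dist x y + dist x z))) *
            (K.len ^ δ / (dist x y + dist x z) ^ p) := by
          rw [mul_div_assoc]
      _ ≤ (F₁ K.len * Ft2 θ F₂ K.len * (2 * Ft3 θ F₃ Q)) *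
            ((c ^ p)⁻¹ * (K.len / Q.len) ^ (δ/2) / ((Q.len ^ n : ℝ))^2) := by
          refine mul_le_mul ?_ hpow hq ?_
          · exact mul_le_mul (mul_le_mul h1 h2 (hF₂0 _) hF1nn) h3 (hF₃0 _)
              (mul_nonneg hF1nn hP2nn)
          · exact mul_nonneg (mul_nonneg hF1nn hP2nn) (mul_nonneg (by norm_num) hP3nn)
      _ = B := by rw [hBdef]; ring
  -- integration
  have hIv : volume I.toSet = ENNReal.ofReal (I.len ^ n) := Cube.volume_toSet I
  have hJv : volume J.toSet = ENNReal.ofReal (J.len ^ n) := Cube.volume_toSet J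
  have hKv : volume K.toSet = ENNReal.ofReal (K.len ^ n) := Cube.volume_toSet K
  have hQv : volume Q.toSet = ENNReal.ofReal (Q.len ^ n) := Cube.volume_toSet Q
  have step1 : ∀ z ∈ J.toSet, ∀ y ∈ I.toSet,
      (∫⁻ x in K.toSet, ENNReal.ofReal
        (F₁ (dist x K.center) * F₂ (dist x y + dist x z) *
          F₃ (1 + (‖x + y‖ + ‖x + z‖) / (1 + dist x y + dist x z)) *
          K.len ^ δ / (dist x y + dist x z) ^ p)) ≤
      ENNReal.ofReal B * ENNReal.ofReal (K.len ^ n) := by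
    intro z hz y hy
    calc (∫⁻ x in K.toSet, ENNReal.ofReal
          (F₁ (dist x K.center) * F₂ (dist x y + dist x z) *
            F₃ (1 + (‖x + y‖ + ‖x + z‖) / (1 + dist x y + dist x z)) *
            K.len ^ δ / (dist x y + dist x z) ^ p))
        ≤ ∫⁻ _x in K.toSet, ENNReal.ofReal B :=
          setLIntegral_mono measurable_const
            (fun x hx => ENNReal.ofReal_le_ofReal (key z hz y hy x hx))
      _ = ENNReal.ofReal B * volume K.toSet := setLIntegral_const _ _
      _ = ENNReal.ofReal B * ENNReal.ofReal (K.len ^ n) := by rw [hKv]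
  have step2 : ∀ z ∈ J.toSet,
      (∫⁻ y in I.toSet, ∫⁻ x in K.toSet, ENNReal.ofReal
        (F₁ (dist x K.center) * F₂ (dist x y + dist x z) *
          F₃ (1 + (‖x + y‖ + ‖x + z‖) / (1 + dist x y + dist x z)) *
          K.len ^ δ / (dist x y + dist x z) ^ p)) ≤
      ENNReal.ofReal B * ENNReal.ofReal (K.len ^ n) * ENNReal.ofReal (I.len ^ n) := by
    intro z hz
    calc (∫⁻ y in I.toSet, ∫⁻ x in K.toSet, ENNReal.ofReal
          (F₁ (dist x K.center) * F₂ (dist x y + dist x z) *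
            F₃ (1 + (‖x + y‖ + ‖x + z‖) / (1 + dist x y + dist x z)) *
            K.len ^ δ / (dist x y + dist x z) ^ p))
        ≤ ∫⁻ _y in I.toSet, ENNReal.ofReal B * ENNReal.ofReal (K.len ^ n) :=
          setLIntegral_mono measurable_const (fun y hy => step1 z hz y hy)
      _ = ENNReal.ofReal B * ENNReal.ofReal (K.len ^ n) * volume I.toSet :=
          setLIntegral_const _ _
      _ = ENNReal.ofReal B * ENNReal.ofReal (K.len ^ n) * ENNReal.ofReal (I.len ^ n) := by
          rw [hIv]
  have step3 :
      (∫⁻ z in J.toSet, ∫⁻ y in I.toSet, ∫⁻ x in K.toSet, ENNReal.ofReal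
        (F₁ (dist x K.center) * F₂ (dist x y + dist x z) *
          F₃ (1 + (‖x + y‖ + ‖x + z‖) / (1 + dist x y + dist x z)) *
          K.len ^ δ / (dist x y + dist x z) ^ p)) ≤
      ENNReal.ofReal B * ENNReal.ofReal (K.len ^ n) * ENNReal.ofReal (I.len ^ n) *
        ENNReal.ofReal (J.len ^ n) := by
    calc (∫⁻ z in J.toSet, ∫⁻ y in I.toSet, ∫⁻ x in K.toSet, ENNReal.ofReal
          (F₁ (dist x K.center) * F₂ (dist x y + dist x z) *
            F₃ (1 + (‖x + y‖ + ‖x + z‖) / (1 + dist x y + dist x z)) *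
            K.len ^ δ / (dist x y + dist x z) ^ p))
        ≤ ∫⁻ _z in J.toSet,
            ENNReal.ofReal B * ENNReal.ofReal (K.len ^ n) * ENNReal.ofReal (I.len ^ n) :=
          setLIntegral_mono measurable_const (fun z hz => step2 z hz)
      _ = ENNReal.ofReal B * ENNReal.ofReal (K.len ^ n) * ENNReal.ofReal (I.len ^ n) *
            volume J.toSet := setLIntegral_const _ _
      _ = _ := by rw [hJv]
  refine le_trans step3 ?_
  rw [← ENNReal.ofReal_mul hBnn,
    ← ENNReal.ofReal_mul (mul_nonneg hBnn (pow_nonneg hK0.le n)),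
    ← ENNReal.ofReal_mul (mul_nonneg (mul_nonneg hBnn (pow_nonneg hK0.le n))
      (pow_nonneg I.len_pos.le n))]
  apply ENNReal.ofReal_le_ofReal
  apply le_of_eq
  rw [hIv, hJv, hKv, hQv, ENNReal.toReal_ofReal (pow_nonneg hK0.le n),
    ENNReal.toReal_ofReal (pow_nonneg hJ0.le n),
    ENNReal.toReal_ofReal (pow_nonneg I.len_pos.le n),
    ENNReal.toReal_ofReal (pow_nonneg hQ0.le n)]
  rw [hBdef]
  ring
end
end

section
/- Let n ≥ 1, r ∈ ℕ with r ≥ 1, γ ∈ (0,1/2), and let D_ω be a dyadic grid on ℝ^n. Let I, J ∈ D_ω and let K ∈ D_ω be good (with parameters r, γ), with ℓ(K) ≤ ℓ(I) = 2ℓ(J). If max{d(K,I), d(K,J)} > 2 ℓ(K)^γ ℓ(J)^{1−γ}, then there exist a cube Q ∈ D_ω and a constant c > 0 depending only on n, γ and r such that I ∪ J ∪ K ⊂ Q and max{d(K,I), d(K,J)} ≥ c ℓ(K)^γ ℓ(Q)^{1−γ}. -/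
open MeasureTheory Set
open scoped ENNReal NNReal

noncomputable section

/-- The cube `2^{-k}([0,1)^n + m) + Σ_{j > k} 2^{-j} ω^j` of the random dyadic grid `D_ω`. -/
def gridCube (n : ℕ) (ω : ℤ → Rn n) (k : ℤ) (m : Fin n → ℤ) : Cube n :=
  ⟨fun i => (2 : ℝ) ^ (-k) * (m i : ℝ) + ∑' j : {j : ℤ // k < j}, (2 : ℝ) ^ (-j.1) * ω j.1 i,
   (2 : ℝ) ^ (-k), by positivity⟩

/-- Membership in the dyadic grid `D_ω`. -/
def memGrid {n : ℕ} (ω : ℤ → Rn n) (I : Cube n) : Prop :=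
  ∃ (k : ℤ) (m : Fin n → ℤ), I = gridCube n ω k m

/-- `ω` is an admissible dyadic-grid parameter: `ω^j ∈ {0,1}^n` for all `j ∈ ℤ`. -/
def IsGridParam {n : ℕ} (ω : ℤ → Rn n) : Prop :=
  ∀ (j : ℤ) (i : Fin n), ω j i = 0 ∨ ω j i = 1

/-- `K ∈ D_ω` is good (with parameters `r`, `γ`) if every `J ∈ D_ω` with
`ℓ(J) ≥ 2^r ℓ(K)` satisfies `d(K, ∂J) > 2 ℓ(K)^γ ℓ(J)^{1-γ}`. -/
def IsGoodCube {n : ℕ} (ω : ℤ → Rn n) (r : ℕ) (γ : ℝ) (K : Cube n) : Prop :=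
  ∀ J : Cube n, memGrid ω J → (2 : ℝ) ^ r * K.len ≤ J.len →
    2 * K.len ^ γ * J.len ^ (1 - γ) < sDist K.toSet (frontier J.toSet)


namespace CAS

variable {n : ℕ}

/-- tail sum of the grid shift -/
noncomputable def S (ω : ℤ → Rn n) (k : ℤ) (i : Fin n) : ℝ :=
  ∑' j : {j : ℤ // k < j}, (2 : ℝ) ^ (-j.1) * ω j.1 i

def ioiEquiv (k : ℤ) : ℕ ≃ {j : ℤ // k < j} where
  toFun := fun i => ⟨k + 1 + i, by omega⟩
  invFun := fun j => (j.1 - (k + 1)).toNat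
  left_inv := fun i => by simp
  right_inv := fun j => by
    ext
    have := j.2
    show k + 1 + ((j.1 - (k + 1)).toNat : ℤ) = j.1
    omega

lemma summable_geom (k : ℤ) : Summable (fun j : {j : ℤ // k < j} => (2 : ℝ) ^ (-j.1)) := by
  set e := ioiEquiv k with he
  rw [← e.summable_iff]
  have heq : ((fun j : {j : ℤ // k < j} => (2 : ℝ) ^ (-j.1)) ∘ e)
      = fun i : ℕ => (2 : ℝ) ^ (-(k + 1)) * (1 / 2 : ℝ) ^ i := by
    funext i
    have h1 : ((e i : {j : ℤ // k < j}) : ℤ) = k + 1 + i := rfl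
    rw [Function.comp_apply, h1, neg_add, zpow_add₀ (by norm_num : (2:ℝ) ≠ 0)]
    congr 1
    rw [zpow_neg, zpow_natCast]
    simp [one_div, inv_pow]
  rw [heq]
  exact (summable_geometric_of_lt_one (by norm_num) (by norm_num)).mul_left _

lemma summable_term {ω : ℤ → Rn n} (hω : IsGridParam ω) (k : ℤ) (i : Fin n) :
    Summable (fun j : {j : ℤ // k < j} => (2 : ℝ) ^ (-j.1) * ω j.1 i) := by
  apply Summable.of_nonneg_of_le _ _ (summable_geom k)
  · intro j
    rcases hω j.1 i with h | h <;> simp [h] <;> positivity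
  · intro j
    rcases hω j.1 i with h | h <;> simp [h]
    positivity

lemma S_split {ω : ℤ → Rn n} (hω : IsGridParam ω) {k' k : ℤ} (hk : k' ≤ k) (i : Fin n) :
    S ω k' i = (∑ j ∈ Finset.Ioc k' k, (2 : ℝ) ^ (-j) * ω j i) + S ω k i := by
  classical
  have hset : Set.Ioi k' = (↑(Finset.Ioc k' k) : Set ℤ) ∪ Set.Ioi k := by
    ext j
    simp only [Set.mem_Ioi, Set.mem_union, Finset.coe_Ioc, Set.mem_Ioc]
    omega
  have hd : Disjoint (↑(Finset.Ioc k' k) : Set ℤ) (Set.Ioi k) := by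
    rw [Set.disjoint_left]
    intro j hj hj'
    simp only [Finset.coe_Ioc, Set.mem_Ioc] at hj
    simp only [Set.mem_Ioi] at hj'
    omega
  have h1 : S ω k' i = ∑' j : ↥((↑(Finset.Ioc k' k) : Set ℤ) ∪ Set.Ioi k),
      (2 : ℝ) ^ (-j.1) * ω j.1 i := by
    rw [S, ← hset]; rfl
  rw [h1, Summable.tsum_union_disjoint (f := fun j : ℤ => (2 : ℝ) ^ (-j) * ω j i) hd
      ((Finset.Ioc k' k).finite_toSet.summable _) (summable_term hω k i),
    Finset.tsum_subtype' (Finset.Ioc k' k) (fun j : ℤ => (2 : ℝ) ^ (-j) * ω j i)]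
  rfl

noncomputable def bit (ω : ℤ → Rn n) (j : ℤ) (i : Fin n) : ℤ := if ω j i = 1 then 1 else 0

noncomputable def Mv (ω : ℤ → Rn n) (k' k : ℤ) (m : Fin n → ℤ) (i : Fin n) : ℤ :=
  m i - ∑ j ∈ Finset.Ioc k' k, 2 ^ (k - j).toNat * bit ω j i

lemma gridCube_corner (ω : ℤ → Rn n) (k : ℤ) (m : Fin n → ℤ) (i : Fin n) :
    (gridCube n ω k m).corner i = (2:ℝ)^(-k) * (m i : ℝ) + S ω k i := rfl

lemma gridCube_len (ω : ℤ → Rn n) (k : ℤ) (m : Fin n → ℤ) :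
    (gridCube n ω k m).len = (2:ℝ)^(-k) := rfl

lemma pow2_cast {k' k : ℤ} (hk : k' ≤ k) :
    (((2:ℤ)^((k - k').toNat) : ℤ) : ℝ) = (2:ℝ)^(k - k') := by
  push_cast
  rw [← zpow_natCast (2:ℝ)]
  congr 1
  omega

lemma len_factor {k' k : ℤ} (hk : k' ≤ k) :
    (2:ℝ)^(-k') = (2:ℝ)^(-k) * (((2:ℤ)^((k - k').toNat) : ℤ) : ℝ) := by
  rw [pow2_cast hk, ← zpow_add₀ (by norm_num : (2:ℝ) ≠ 0)]
  congr 1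
  ring

lemma corner_eq_Mv {ω : ℤ → Rn n} (hω : IsGridParam ω) {k' k : ℤ} (hk : k' ≤ k)
    (m : Fin n → ℤ) (i : Fin n) :
    (gridCube n ω k m).corner i = (2:ℝ)^(-k) * ((Mv ω k' k m i : ℤ) : ℝ) + S ω k' i := by
  have hT : (2:ℝ)^(-k) * ((∑ j ∈ Finset.Ioc k' k, (2:ℤ) ^ (k - j).toNat * bit ω j i : ℤ) : ℝ)
      = ∑ j ∈ Finset.Ioc k' k, (2:ℝ)^(-j) * ω j i := by
    push_cast
    rw [Finset.mul_sum]
    apply Finset.sum_congr rfl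
    intro j hj
    simp only [Finset.mem_Ioc] at hj
    have hb : ((bit ω j i : ℤ) : ℝ) = ω j i := by
      rcases hω j i with h | h <;> simp [bit, h]
    have hp : (2:ℝ) ^ ((k - j).toNat) = (2:ℝ) ^ (k - j) := by
      rw [← zpow_natCast (2:ℝ)]
      congr 1
      omega
    rw [hb, hp, ← mul_assoc, ← zpow_add₀ (by norm_num : (2:ℝ) ≠ 0)]
    congr 2
    ring
  rw [gridCube_corner, S_split hω hk i, Mv]
  push_cast [Mv] at hT ⊢
  linarith [hT]

lemma grid_subset {ω : ℤ → Rn n} (hω : IsGridParam ω) {k' k : ℤ} (hk : k' ≤ k)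
    (m m' : Fin n → ℤ) (hc : ∀ i, m' i = Mv ω k' k m i / 2 ^ ((k - k').toNat)) :
    (gridCube n ω k m).toSet ⊆ (gridCube n ω k' m').toSet := by
  set p : ℤ := 2 ^ ((k - k').toNat) with hp
  have hppos : (0:ℤ) < p := pow_pos two_pos _
  set δ : ℝ := (2:ℝ)^(-k) with hδ
  have hδpos : (0:ℝ) < δ := by positivity
  intro x hx
  intro i
  have hxi := hx i
  rw [corner_eq_Mv hω hk m i] at hxi
  rw [gridCube_len] at hxi
  set M : ℤ := Mv ω k' k m i with hM
  have hdiv1 : p * (M / p) ≤ M := by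
    have h1 := Int.mul_ediv_add_emod M p
    have h2 := Int.emod_nonneg M (ne_of_gt hppos)
    omega
  have hdiv2 : M + 1 ≤ p * (M / p) + p := by
    have h1 := Int.mul_ediv_add_emod M p
    have h3 := Int.emod_lt_of_pos M hppos
    omega
  have hQc : (gridCube n ω k' m').corner i = δ * ((p * m' i : ℤ) : ℝ) + S ω k' i := by
    rw [gridCube_corner, len_factor hk, ← hp]
    push_cast
    ring
  have hQl : (gridCube n ω k' m').len = δ * (p : ℝ) := by
    rw [gridCube_len, len_factor hk, ← hp]
  rw [hQc, hQl]
  have hc1 : (↑(p * m' i) : ℝ) ≤ (M : ℝ) := by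
    have : p * m' i ≤ M := by rw [hc i]; exact hdiv1
    exact_mod_cast this
  have hc2 : (M : ℝ) + 1 ≤ (↑(p * m' i) : ℝ) + (p : ℝ) := by
    have : M + 1 ≤ p * m' i + p := by rw [hc i]; exact hdiv2
    exact_mod_cast this
  constructor
  · nlinarith [hxi.1]
  · nlinarith [hxi.2]

lemma grid_disjoint {ω : ℤ → Rn n} (hω : IsGridParam ω) {k' k : ℤ} (hk : k' ≤ k)
    (m m' : Fin n → ℤ) (i : Fin n)
    (hi : m' i ≠ Mv ω k' k m i / 2 ^ ((k - k').toNat)) :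
    ∀ x ∈ (gridCube n ω k m).toSet, x ∉ (gridCube n ω k' m').toSet := by
  set p : ℤ := 2 ^ ((k - k').toNat) with hp
  have hppos : (0:ℤ) < p := pow_pos two_pos _
  set δ : ℝ := (2:ℝ)^(-k) with hδ
  have hδpos : (0:ℝ) < δ := by positivity
  intro x hx hx'
  have hxi := hx i
  have hxi' := hx' i
  rw [corner_eq_Mv hω hk m i, gridCube_len] at hxi
  set M : ℤ := Mv ω k' k m i with hM
  have hQc : (gridCube n ω k' m').corner i = δ * ((p * m' i : ℤ) : ℝ) + S ω k' i := by
    rw [gridCube_corner, len_factor hk, ← hp]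
    push_cast
    ring
  have hQl : (gridCube n ω k' m').len = δ * (p : ℝ) := by
    rw [gridCube_len, len_factor hk, ← hp]
  rw [hQc, hQl] at hxi'
  have h1 := Int.mul_ediv_add_emod M p
  have h2 := Int.emod_nonneg M (ne_of_gt hppos)
  have h3 := Int.emod_lt_of_pos M hppos
  have hsep : M + 1 ≤ p * m' i ∨ p * m' i + p ≤ M := by
    rcases lt_or_gt_of_ne hi with h | h
    · right
      have h0 : m' i + 1 ≤ M / p := h
      have h4 : p * (m' i + 1) ≤ p * (M / p) := mul_le_mul_of_nonneg_left h0 hppos.le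
      have h5 : p * (m' i + 1) = p * m' i + p := by ring
      omega
    · left
      have h0 : M / p + 1 ≤ m' i := h
      have h4 : p * (M / p + 1) ≤ p * m' i := mul_le_mul_of_nonneg_left h0 hppos.le
      have h5 : p * (M / p + 1) = p * (M / p) + p := by ring
      omega
  rcases hsep with h | h
  · have hcast : ((M : ℝ) + 1) ≤ ((p * m' i : ℤ) : ℝ) := by exact_mod_cast h
    have hmul := mul_le_mul_of_nonneg_left hcast hδpos.le
    have hexp : δ * ((M : ℝ) + 1) = δ * (M : ℝ) + δ := by ring
    linarith [hxi.2, hxi'.1]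
  · have hcast : ((p * m' i : ℤ) : ℝ) + (p : ℝ) ≤ (M : ℝ) := by exact_mod_cast h
    have hmul := mul_le_mul_of_nonneg_left hcast hδpos.le
    have hexp : δ * (((p * m' i : ℤ) : ℝ) + (p : ℝ))
        = δ * ((p * m' i : ℤ) : ℝ) + δ * (p : ℝ) := by ring
    linarith [hxi.1, hxi'.2]

lemma exists_ancestor {ω : ℤ → Rn n} (hω : IsGridParam ω) {k' k : ℤ} (hk : k' ≤ k)
    (m : Fin n → ℤ) :
    ∃ m', (gridCube n ω k m).toSet ⊆ (gridCube n ω k' m').toSet :=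
  ⟨fun i => Mv ω k' k m i / 2 ^ ((k - k').toNat), grid_subset hω hk m _ fun _ => rfl⟩

lemma grid_subset_or_disjoint {ω : ℤ → Rn n} (hω : IsGridParam ω) {k' k : ℤ} (hk : k' ≤ k)
    (m m' : Fin n → ℤ) :
    (gridCube n ω k m).toSet ⊆ (gridCube n ω k' m').toSet ∨
      ∀ x ∈ (gridCube n ω k m).toSet, x ∉ (gridCube n ω k' m').toSet := by
  by_cases hc : ∀ i, m' i = Mv ω k' k m i / 2 ^ ((k - k').toNat)
  · exact Or.inl (grid_subset hω hk m m' hc)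
  · push_neg at hc
    obtain ⟨i, hi⟩ := hc
    exact Or.inr (grid_disjoint hω hk m m' i hi)

lemma toSet_nonempty (Q : Cube n) : Q.toSet.Nonempty :=
  ⟨Q.corner, fun i => ⟨le_refl _, by linarith [Q.len_pos]⟩⟩

/-- componentwise clamp of a point into (the closed hull of) a cube -/
def clamp (Q : Cube n) (y : Rn n) : Rn n :=
  fun j => max (Q.corner j) (min (y j) (Q.corner j + Q.len))

lemma clamp_dist_le {a b x y : ℝ} (hax : a ≤ x) (hxb : x ≤ b) :
    |max a (min y b) - x| ≤ |y - x| := by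
  rcases le_total y a with h | h
  · have hab : a ≤ b := le_trans hax hxb
    rw [min_eq_left (le_trans h hab), max_eq_left h,
      abs_of_nonpos (by linarith), abs_of_nonpos (by linarith)]
    linarith
  · rcases le_total y b with h2 | h2
    · rw [min_eq_left h2, max_eq_right h]
    · rw [min_eq_right h2, max_eq_right (le_trans hax hxb),
        abs_of_nonneg (by linarith), abs_of_nonneg (by linarith)]
      linarith

lemma clamp_self_dist_le {a b x w : ℝ} (haw : a ≤ w) (hwb : w ≤ b) :
    |max a (min x b) - x| ≤ |w - x| := by
  have hab : a ≤ b := le_trans haw hwb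
  rcases le_total x a with h | h
  · rw [min_eq_left (le_trans h hab), max_eq_left h, abs_of_nonneg (by linarith)]
    calc a - x ≤ w - x := by linarith
      _ ≤ |w - x| := le_abs_self _
  · rcases le_total x b with h2 | h2
    · rw [min_eq_left h2, max_eq_right h]
      simp
    · rw [min_eq_right h2, max_eq_right hab, abs_of_nonpos (by linarith)]
      calc -(b - x) = x - b := by ring
        _ ≤ x - w := by linarith
        _ = -(w - x) := by ring
        _ ≤ |w - x| := neg_le_abs _

lemma clamp_mem_frontier (Q : Cube n) {y : Rn n} (hy : y ∉ Q.toSet) :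
    clamp Q y ∈ frontier Q.toSet := by
  rw [frontier_eq_closure_inter_closure]
  have hclamp_le : ∀ j, clamp Q y j ≤ Q.corner j + Q.len := by
    intro j
    have : Q.corner j ≤ Q.corner j + Q.len := by linarith [Q.len_pos]
    exact max_le this (min_le_right _ _)
  have hclamp_ge : ∀ j, Q.corner j ≤ clamp Q y j := fun j => le_max_left _ _
  constructor
  · -- clamp is in the closure of the cube
    rw [Metric.mem_closure_iff]
    intro ε hε
    set d := min (ε / 2) (Q.len / 2) with hd
    have hd0 : 0 < d := lt_min (by linarith) (by linarith [Q.len_pos])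
    have hdε : d ≤ ε / 2 := min_le_left _ _
    have hdl : d ≤ Q.len / 2 := min_le_right _ _
    refine ⟨fun j => min (clamp Q y j) (Q.corner j + Q.len - d), ?_, ?_⟩
    · intro j
      constructor
      · exact le_min (hclamp_ge j) (by linarith [Q.len_pos])
      · calc min (clamp Q y j) (Q.corner j + Q.len - d) ≤ Q.corner j + Q.len - d :=
            min_le_right _ _
          _ < Q.corner j + Q.len := by linarith
    · refine lt_of_le_of_lt ((dist_pi_le_iff (by linarith)).2 fun j => ?_) (by linarith : ε / 2 < ε)
      rw [Real.dist_eq]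
      have h1 : min (clamp Q y j) (Q.corner j + Q.len - d) ≤ clamp Q y j := min_le_left _ _
      have h2 : clamp Q y j - d ≤ min (clamp Q y j) (Q.corner j + Q.len - d) :=
        le_min (by linarith) (by linarith [hclamp_le j])
      rw [abs_of_nonneg (by linarith)]
      linarith
  · -- clamp is in the closure of the complement
    have hex : ∃ i, y i < Q.corner i ∨ Q.corner i + Q.len ≤ y i := by
      by_contra hall
      push_neg at hall
      exact hy fun i => ⟨(hall i).1, (hall i).2⟩
    obtain ⟨i, hi⟩ := hex
    rcases hi with hi | hi
    · -- y i below: clamp touches the lower face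
      have hci : clamp Q y i = Q.corner i := by
        have h1 : y i ≤ Q.corner i + Q.len := by linarith [Q.len_pos]
        rw [clamp, min_eq_left h1, max_eq_left (le_of_lt hi)]
      rw [Metric.mem_closure_iff]
      intro ε hε
      refine ⟨Function.update (clamp Q y) i (Q.corner i - ε / 2), ?_, ?_⟩
      · intro hmem
        have := (hmem i).1
        rw [Function.update_self] at this
        linarith
      · refine lt_of_le_of_lt ((dist_pi_le_iff (by linarith)).2 fun j => ?_)
          (by linarith : ε / 2 < ε)
        rcases eq_or_ne j i with rfl | hne
        · rw [Function.update_self, Real.dist_eq, hci, abs_of_nonneg (by linarith)]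
          linarith
        · rw [Function.update_of_ne hne]
          simp [dist_self]
          linarith
    · -- y i above: clamp itself is outside the (half-open) cube
      apply subset_closure
      intro hmem
      have h1 := (hmem i).2
      have h2 : clamp Q y i = Q.corner i + Q.len := by
        rw [clamp, min_eq_right (by linarith), max_eq_right (by linarith [Q.len_pos])]
      rw [h2] at h1
      linarith

lemma sDist_le {E F : Set (Rn n)} {x y : Rn n} (hx : x ∈ E) (hy : y ∈ F) :
    sDist E F ≤ dist x y := by
  apply csInf_le
  · refine ⟨0, ?_⟩
    rintro z ⟨⟨u, v⟩, _, rfl⟩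
    exact dist_nonneg
  · exact ⟨(x, y), ⟨hx, hy⟩, rfl⟩

lemma le_sDist {E F : Set (Rn n)} (hE : E.Nonempty) (hF : F.Nonempty) {c : ℝ}
    (h : ∀ x ∈ E, ∀ y ∈ F, c ≤ dist x y) : c ≤ sDist E F := by
  apply le_csInf
  · obtain ⟨x, hx⟩ := hE
    obtain ⟨y, hy⟩ := hF
    exact ⟨dist x y, ⟨(x, y), ⟨hx, hy⟩, rfl⟩⟩
  · rintro z ⟨⟨u, v⟩, ⟨hu, hv⟩, rfl⟩
    exact h u hu v hv

lemma sDist_frontier_le_of_inside (Q : Cube n) {E F : Set (Rn n)}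
    (hEne : E.Nonempty) (hFne : F.Nonempty)
    (hE : E ⊆ Q.toSet) (hF : ∀ y ∈ F, y ∉ Q.toSet) :
    sDist E (frontier Q.toSet) ≤ sDist E F := by
  apply le_sDist hEne hFne
  intro x hx y hy
  have hz := clamp_mem_frontier Q (hF y hy)
  refine le_trans (sDist_le hx hz) ?_
  refine (dist_pi_le_iff dist_nonneg).2 fun j => ?_
  have hxj := hE hx j
  rw [Real.dist_eq, abs_sub_comm]
  calc |clamp Q y j - x j| ≤ |y j - x j| := clamp_dist_le hxj.1 hxj.2.le
    _ = dist (x j) (y j) := by rw [Real.dist_eq, abs_sub_comm]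
    _ ≤ dist x y := dist_le_pi_dist x y j

lemma sDist_frontier_le_of_outside (Q : Cube n) {E F : Set (Rn n)}
    (hEne : E.Nonempty) (hFne : F.Nonempty)
    (hE : ∀ x ∈ E, x ∉ Q.toSet) (hF : F ⊆ Q.toSet) :
    sDist E (frontier Q.toSet) ≤ sDist E F := by
  apply le_sDist hEne hFne
  intro x hx y hy
  have hz := clamp_mem_frontier Q (hE x hx)
  refine le_trans (sDist_le hx hz) ?_
  refine (dist_pi_le_iff dist_nonneg).2 fun j => ?_
  have hyj := hF hy j
  rw [Real.dist_eq, abs_sub_comm]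
  calc |clamp Q x j - x j| ≤ |y j - x j| := clamp_self_dist_le hyj.1 hyj.2.le
    _ = dist (x j) (y j) := by rw [Real.dist_eq, abs_sub_comm]
    _ ≤ dist x y := dist_le_pi_dist x y j

end CAS

/-- common dyadic ancestor in the separated case. -/
theorem common_ancestor_separated
    (n : ℕ) (hn : 1 ≤ n) (r : ℕ) (hr : 1 ≤ r) (γ : ℝ) (hγ0 : 0 < γ) (hγ1 : γ < 1 / 2) :
    ∃ c : ℝ, 0 < c ∧
      ∀ (ω : ℤ → Rn n), IsGridParam ω →
        ∀ I J K : Cube n, memGrid ω I → memGrid ω J → memGrid ω K →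
          IsGoodCube ω r γ K →
          K.len ≤ I.len → I.len = 2 * J.len →
          2 * K.len ^ γ * J.len ^ (1 - γ) <
            max (sDist K.toSet I.toSet) (sDist K.toSet J.toSet) →
          ∃ Q : Cube n, memGrid ω Q ∧ I.toSet ∪ J.toSet ∪ K.toSet ⊆ Q.toSet ∧
            c * K.len ^ γ * Q.len ^ (1 - γ) ≤
              max (sDist K.toSet I.toSet) (sDist K.toSet J.toSet) := by
  have h2ne : (2:ℝ) ≠ 0 := by norm_num
  refine ⟨(2:ℝ)^(-(r:ℤ)), by positivity, ?_⟩
  intro ω hω I J K hI hJ hK hgood hKI hIJ hmax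
  obtain ⟨kI, mI, rfl⟩ := hI
  obtain ⟨kJ, mJ, rfl⟩ := hJ
  obtain ⟨kK, mK, rfl⟩ := hK
  simp only [CAS.gridCube_len] at hKI hIJ hmax ⊢
  have h1γ : (0:ℝ) < 1 - γ := by linarith
  have hlK : (0:ℝ) < (2:ℝ)^(-kK) := by positivity
  have hlI : (0:ℝ) < (2:ℝ)^(-kI) := by positivity
  have hlJ : (0:ℝ) < (2:ℝ)^(-kJ) := by positivity
  have hKγ : (0:ℝ) < ((2:ℝ)^(-kK)) ^ γ := Real.rpow_pos_of_pos hlK γ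
  set D := max (sDist (gridCube n ω kK mK).toSet (gridCube n ω kI mI).toSet)
      (sDist (gridCube n ω kK mK).toSet (gridCube n ω kJ mJ).toSet) with hDdef
  have hD0 : 0 < D := lt_trans (by positivity) hmax
  -- index relations
  have hkIK : kI ≤ kK := by
    have := (zpow_le_zpow_iff_right₀ (by norm_num : (1:ℝ) < 2)).1 hKI
    omega
  have hkJ : kJ = kI + 1 := by
    have h : (2:ℝ)^(-kI) = (2:ℝ)^(1 + -kJ) := by
      rw [zpow_add₀ h2ne]
      simpa using hIJ
    have := zpow_right_injective₀ (by norm_num : (0:ℝ) < 2) (by norm_num : (2:ℝ) ≠ 1) h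
    omega
  -- choice of the scale
  have hex : ∃ s : ℕ, D ≤ 2 * ((2:ℝ)^(-kK)) ^ γ * ((2:ℝ) ^ s * (2:ℝ)^(-kI)) ^ (1 - γ) := by
    have ht : Filter.Tendsto (fun s : ℕ => ((2:ℝ) ^ s * (2:ℝ)^(-kI)) ^ (1 - γ))
        Filter.atTop Filter.atTop :=
      (tendsto_rpow_atTop h1γ).comp
        ((tendsto_pow_atTop_atTop_of_one_lt (by norm_num : (1:ℝ) < 2)).atTop_mul_const hlI)
    obtain ⟨s, hs⟩ := (ht.eventually_ge_atTop (D / (2 * ((2:ℝ)^(-kK)) ^ γ))).exists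
    refine ⟨s, ?_⟩
    have h2 := (div_le_iff₀ (by positivity : (0:ℝ) < 2 * ((2:ℝ)^(-kK)) ^ γ)).1 hs
    calc D ≤ ((2:ℝ) ^ s * (2:ℝ)^(-kI)) ^ (1 - γ) * (2 * ((2:ℝ)^(-kK)) ^ γ) := h2
      _ = 2 * ((2:ℝ)^(-kK)) ^ γ * ((2:ℝ) ^ s * (2:ℝ)^(-kI)) ^ (1 - γ) := by ring
  set s₀ := Nat.find hex with hs₀def
  have hPs₀ := Nat.find_spec hex
  set s := max r s₀ with hsdef
  have hs₀s : s₀ ≤ s := le_max_right _ _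
  have hrs : r ≤ s := le_max_left _ _
  have hPs : D ≤ 2 * ((2:ℝ)^(-kK)) ^ γ * ((2:ℝ) ^ s * (2:ℝ)^(-kI)) ^ (1 - γ) := by
    refine le_trans hPs₀ ?_
    have h1 : ((2:ℝ) ^ s₀ * (2:ℝ)^(-kI)) ^ (1 - γ) ≤ ((2:ℝ) ^ s * (2:ℝ)^(-kI)) ^ (1 - γ) := by
      apply Real.rpow_le_rpow (by positivity) _ h1γ.le
      have h2 : (2:ℝ) ^ s₀ ≤ (2:ℝ) ^ s := pow_le_pow_right₀ one_le_two hs₀s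
      exact mul_le_mul_of_nonneg_right h2 hlI.le
    nlinarith [hKγ]
  -- the ancestor cube
  set kQ : ℤ := kI - (s : ℤ) with hkQdef
  have hkQI : kQ ≤ kI := by omega
  have hkQK : kQ ≤ kK := by omega
  have hkQJ : kQ ≤ kJ := by omega
  obtain ⟨mQ, hIQ⟩ := CAS.exists_ancestor hω hkQI mI
  have hQlen : (2:ℝ)^(-kQ) = (2:ℝ) ^ s * (2:ℝ)^(-kI) := by
    rw [← zpow_natCast (2:ℝ) s, ← zpow_add₀ h2ne]
    congr 1
    omega
  -- goodness applies to Q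
  have hgpre : (2:ℝ) ^ r * (gridCube n ω kK mK).len ≤ (gridCube n ω kQ mQ).len := by
    simp only [CAS.gridCube_len]
    rw [hQlen]
    have h1 : (2:ℝ) ^ r ≤ (2:ℝ) ^ s := pow_le_pow_right₀ one_le_two hrs
    have h2 : (0:ℝ) < (2:ℝ) ^ r := by positivity
    nlinarith
  have hgoodQ := hgood (gridCube n ω kQ mQ) ⟨kQ, mQ, rfl⟩ hgpre
  simp only [CAS.gridCube_len] at hgoodQ
  rw [hQlen] at hgoodQ
  have hDfr : D < sDist (gridCube n ω kK mK).toSet (frontier (gridCube n ω kQ mQ).toSet) :=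
    lt_of_le_of_lt hPs hgoodQ
  -- K ⊆ Q
  have hKQ : (gridCube n ω kK mK).toSet ⊆ (gridCube n ω kQ mQ).toSet := by
    rcases CAS.grid_subset_or_disjoint hω hkQK mK mQ with h | h
    · exact h
    · exfalso
      have h1 := CAS.sDist_frontier_le_of_outside (gridCube n ω kQ mQ)
        (CAS.toSet_nonempty _) (CAS.toSet_nonempty _) h hIQ
      have h2 : sDist (gridCube n ω kK mK).toSet (gridCube n ω kI mI).toSet ≤ D :=
        le_max_left _ _
      linarith
  -- J ⊆ Q
  have hJQ : (gridCube n ω kJ mJ).toSet ⊆ (gridCube n ω kQ mQ).toSet := by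
    rcases CAS.grid_subset_or_disjoint hω hkQJ mJ mQ with h | h
    · exact h
    · exfalso
      have h1 := CAS.sDist_frontier_le_of_inside (gridCube n ω kQ mQ)
        (CAS.toSet_nonempty _) (CAS.toSet_nonempty _) hKQ h
      have h2 : sDist (gridCube n ω kK mK).toSet (gridCube n ω kJ mJ).toSet ≤ D :=
        le_max_right _ _
      linarith
  refine ⟨gridCube n ω kQ mQ, ⟨kQ, mQ, rfl⟩, ?_, ?_⟩
  · intro x hx
    rcases hx with (hx | hx) | hx
    exacts [hIQ hx, hJQ hx, hKQ hx]
  · -- the quantitative lower bound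
    simp only [CAS.gridCube_len]
    rw [hQlen]
    by_cases hcase : s₀ ≤ r
    · -- here s = r and ℓ(Q) = 2^(r+1) ℓ(J)
      have hsr : s = r := max_eq_left hcase
      have hA : (2:ℝ) ^ s * (2:ℝ)^(-kI) = ((2:ℝ) ^ r * 2) * (2:ℝ)^(-kJ) := by
        rw [hsr, hIJ]
        ring
      have hApos : (1:ℝ) ≤ (2:ℝ) ^ r * 2 := by
        have : (1:ℝ) ≤ (2:ℝ) ^ r := one_le_pow₀ one_le_two
        nlinarith
      have hcancel : (2:ℝ)^(-(r:ℤ)) * ((2:ℝ) ^ r * 2) = 2 := by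
        rw [← zpow_natCast (2:ℝ) r, ← mul_assoc, ← zpow_add₀ h2ne]
        norm_num
      calc (2:ℝ)^(-(r:ℤ)) * ((2:ℝ)^(-kK)) ^ γ * ((2:ℝ) ^ s * (2:ℝ)^(-kI)) ^ (1 - γ)
          = (2:ℝ)^(-(r:ℤ)) * ((2:ℝ)^(-kK)) ^ γ *
            (((2:ℝ) ^ r * 2) ^ (1 - γ) * ((2:ℝ)^(-kJ)) ^ (1 - γ)) := by
            rw [hA, Real.mul_rpow (by positivity) hlJ.le]
        _ ≤ (2:ℝ)^(-(r:ℤ)) * ((2:ℝ)^(-kK)) ^ γ *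
            (((2:ℝ) ^ r * 2) * ((2:ℝ)^(-kJ)) ^ (1 - γ)) := by
            have hexp : ((2:ℝ) ^ r * 2) ^ (1 - γ) ≤ (2:ℝ) ^ r * 2 := by
              nth_rewrite 2 [← Real.rpow_one ((2:ℝ) ^ r * 2)]
              exact Real.rpow_le_rpow_of_exponent_le hApos (by linarith)
            have hJγ : (0:ℝ) ≤ ((2:ℝ)^(-kJ)) ^ (1 - γ) := Real.rpow_nonneg hlJ.le _
            have hpos : (0:ℝ) ≤ (2:ℝ)^(-(r:ℤ)) * ((2:ℝ)^(-kK)) ^ γ := by positivity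
            exact mul_le_mul_of_nonneg_left (mul_le_mul_of_nonneg_right hexp hJγ) hpos
        _ = 2 * ((2:ℝ)^(-kK)) ^ γ * ((2:ℝ)^(-kJ)) ^ (1 - γ) := by
            rw [show (2:ℝ)^(-(r:ℤ)) * ((2:ℝ)^(-kK)) ^ γ *
                (((2:ℝ) ^ r * 2) * ((2:ℝ)^(-kJ)) ^ (1 - γ))
              = ((2:ℝ)^(-(r:ℤ)) * ((2:ℝ) ^ r * 2)) *
                (((2:ℝ)^(-kK)) ^ γ * ((2:ℝ)^(-kJ)) ^ (1 - γ)) from by ring, hcancel]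
            ring
        _ ≤ D := hmax.le
    · -- here s = s₀ and the previous scale fails
      have hsr : s = s₀ := max_eq_right (le_of_not_ge hcase)
      have hs₀1 : 1 ≤ s₀ := by omega
      have hmin : ¬ D ≤ 2 * ((2:ℝ)^(-kK)) ^ γ * ((2:ℝ) ^ (s₀ - 1) * (2:ℝ)^(-kI)) ^ (1 - γ) :=
        Nat.find_min hex (by omega)
      push_neg at hmin
      set B : ℝ := (2:ℝ) ^ (s₀ - 1) * (2:ℝ)^(-kI) with hBdef
      have hBpos : (0:ℝ) < B := by positivity
      have hQB : (2:ℝ) ^ s * (2:ℝ)^(-kI) = 2 * B := by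
        have h5 : (2:ℝ) ^ (s₀ - 1) * 2 = (2:ℝ) ^ s₀ := by
          rw [← pow_succ]
          congr 1
          omega
        rw [hsr, hBdef, ← h5]
        ring
      have h2γ : (2:ℝ) ^ (1 - γ) ≤ 2 := by
        nth_rewrite 2 [← Real.rpow_one (2:ℝ)]
        exact Real.rpow_le_rpow_of_exponent_le one_le_two (by linarith)
      have hr1 : (2:ℝ)^(-(r:ℤ)) ≤ 1 := by
        rw [show (1:ℝ) = (2:ℝ) ^ (0:ℤ) from (zpow_zero 2).symm]
        exact (zpow_le_zpow_iff_right₀ (by norm_num : (1:ℝ) < 2)).2 (by omega)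
      have hBγ : (0:ℝ) ≤ B ^ (1 - γ) := Real.rpow_nonneg hBpos.le _
      calc (2:ℝ)^(-(r:ℤ)) * ((2:ℝ)^(-kK)) ^ γ * ((2:ℝ) ^ s * (2:ℝ)^(-kI)) ^ (1 - γ)
          = (2:ℝ)^(-(r:ℤ)) * ((2:ℝ)^(-kK)) ^ γ * ((2:ℝ) ^ (1 - γ) * B ^ (1 - γ)) := by
            rw [hQB, Real.mul_rpow (by norm_num) hBpos.le]
        _ ≤ 1 * ((2:ℝ)^(-kK)) ^ γ * (2 * B ^ (1 - γ)) := by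
            have h1 : (2:ℝ)^(-(r:ℤ)) * ((2:ℝ)^(-kK)) ^ γ ≤ 1 * ((2:ℝ)^(-kK)) ^ γ :=
              mul_le_mul_of_nonneg_right hr1 hKγ.le
            have h2 : (2:ℝ) ^ (1 - γ) * B ^ (1 - γ) ≤ 2 * B ^ (1 - γ) :=
              mul_le_mul_of_nonneg_right h2γ hBγ
            have h3 : (0:ℝ) ≤ (2:ℝ)^(-(r:ℤ)) * ((2:ℝ)^(-kK)) ^ γ := by positivity
            have h4 : (0:ℝ) ≤ (2:ℝ) ^ (1 - γ) * B ^ (1 - γ) := by positivity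
            calc (2:ℝ)^(-(r:ℤ)) * ((2:ℝ)^(-kK)) ^ γ * ((2:ℝ) ^ (1 - γ) * B ^ (1 - γ))
                ≤ (2:ℝ)^(-(r:ℤ)) * ((2:ℝ)^(-kK)) ^ γ * (2 * B ^ (1 - γ)) :=
                  mul_le_mul_of_nonneg_left h2 h3
              _ ≤ 1 * ((2:ℝ)^(-kK)) ^ γ * (2 * B ^ (1 - γ)) :=
                  mul_le_mul_of_nonneg_right h1 (by positivity)
        _ = 2 * ((2:ℝ)^(-kK)) ^ γ * B ^ (1 - γ) := by ring
        _ ≤ D := hmin.le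
end
end

section
/- Let n₁, n₂ ≥ 1, let D¹ = D_{ω₁} and D² = D_{ω₂} be dyadic grids on ℝ^{n₁} and ℝ^{n₂} respectively, and let D := {R¹ × R² : R¹ ∈ D¹, R² ∈ D²} be the associated family of dyadic rectangles in ℝ^{n₁}×ℝ^{n₂}. Let (λ_R)_{R∈D} be a family of non-negative real numbers. Then the following are equivalent, and each implication preserves the constant: (i) there is C < ∞ such that Σ_{R∈D, R⊂U} λ_R ≤ C|U| for every Lebesgue measurable set U ⊂ ℝ^{n₁}×ℝ^{n₂} (this is the Carleson condition; since the sum only involves the rectangles contained in U, it is equivalent to the same condition restricted to sets U that are unions of rectangles from D); (ii) there is C < ∞ such that for every family (a_R)_{R∈D} of non-negative real numbers, Σ_{R∈D} λ_R a_R ≤ C ∫_{ℝ^{n₁}×ℝ^{n₂}} sup{a_R : R ∈ D, x ∈ R} dx, where the supremum of the empty set is 0 and the integral is the Lebesgue (outer) integral. -/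
open MeasureTheory Set
open scoped ENNReal NNReal

noncomputable section

abbrev Rnn (n₁ n₂ : ℕ) := Rn n₁ × Rn n₂

/-- A dyadic rectangle `R¹ × R²` with `R¹ ∈ D_{ω₁}`, `R² ∈ D_{ω₂}`. -/
def IsBiGridRect {n₁ n₂ : ℕ} (ω₁ : ℤ → Rn n₁) (ω₂ : ℤ → Rn n₂)
    (R : Set (Rnn n₁ n₂)) : Prop :=
  ∃ (I : Cube n₁) (J : Cube n₂), memGrid ω₁ I ∧ memGrid ω₂ J ∧ R = I.toSet ×ˢ J.toSet

lemma slice_vol (c : ℝ≥0∞) : volume ({t : ℝ | ENNReal.ofReal t < c} ∩ Set.Ioi 0) = c := by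
  rcases eq_or_ne c ⊤ with rfl | hc
  · have h : {t : ℝ | ENNReal.ofReal t < ⊤} ∩ Set.Ioi 0 = Set.Ioi 0 := by
      simp [Set.inter_eq_right]
    rw [h, Real.volume_Ioi]
  · have h1 : {t : ℝ | ENNReal.ofReal t < c} ∩ Set.Ioi 0 = Set.Ioo 0 c.toReal := by
      ext t
      simp only [Set.mem_inter_iff, Set.mem_setOf_eq, Set.mem_Ioi, Set.mem_Ioo]
      constructor
      · rintro ⟨h, ht⟩
        exact ⟨ht, (ENNReal.ofReal_lt_iff_lt_toReal ht.le hc).mp h⟩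
      · rintro ⟨ht, h⟩
        exact ⟨(ENNReal.ofReal_lt_iff_lt_toReal ht.le hc).mpr h, ht⟩
    rw [h1, Real.volume_Ioo]
    simp [ENNReal.ofReal_toReal hc]

lemma layercake_ennreal {α : Type*} [MeasurableSpace α] (μ : Measure α) [SigmaFinite μ]
    (f : α → ℝ≥0∞) (hf : Measurable f) :
    ∫⁻ t in Set.Ioi (0:ℝ), μ {x | ENNReal.ofReal t < f x} = ∫⁻ x, f x ∂μ := by
  set S : Set (ℝ × α) := {p | ENNReal.ofReal p.1 < f p.2} with hS
  have hSm : MeasurableSet S :=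
    measurableSet_lt (ENNReal.measurable_ofReal.comp measurable_fst) (hf.comp measurable_snd)
  have hmeas : AEMeasurable (Function.uncurry fun (t : ℝ) (x : α) =>
      S.indicator (fun _ => (1:ℝ≥0∞)) (t, x)) ((volume.restrict (Set.Ioi 0)).prod μ) := by
    have : (Function.uncurry fun (t : ℝ) (x : α) => S.indicator (fun _ => (1:ℝ≥0∞)) (t, x))
        = S.indicator (fun _ => (1:ℝ≥0∞)) := rfl
    rw [this]
    exact ((measurable_const.indicator hSm)).aemeasurable
  have swap := lintegral_lintegral_swap hmeas
  have h1 : ∀ t : ℝ, ∫⁻ x, S.indicator (fun _ => (1:ℝ≥0∞)) (t, x) ∂μ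
      = μ {x | ENNReal.ofReal t < f x} := by
    intro t
    have : (fun x => S.indicator (fun _ => (1:ℝ≥0∞)) (t, x))
        = ({x | ENNReal.ofReal t < f x}).indicator (fun _ => (1:ℝ≥0∞)) := by
      funext x
      simp [Set.indicator_apply, hS]
    rw [this]
    exact lintegral_indicator_one (measurableSet_lt measurable_const hf)
  have h2 : ∀ x : α, ∫⁻ t in Set.Ioi (0:ℝ), S.indicator (fun _ => (1:ℝ≥0∞)) (t, x) = f x := by
    intro x
    have : (fun t : ℝ => S.indicator (fun _ => (1:ℝ≥0∞)) (t, x))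
        = ({t : ℝ | ENNReal.ofReal t < f x}).indicator (fun _ => (1:ℝ≥0∞)) := by
      funext t
      simp [Set.indicator_apply, hS]
    have hset : MeasurableSet {t : ℝ | ENNReal.ofReal t < f x} :=
      measurableSet_lt ENNReal.measurable_ofReal measurable_const
    have h3 : (∫⁻ t in Set.Ioi (0:ℝ),
        ({t : ℝ | ENNReal.ofReal t < f x}).indicator (fun _ => (1:ℝ≥0∞)) t)
        = (volume.restrict (Set.Ioi 0)) {t : ℝ | ENNReal.ofReal t < f x} := by
      exact lintegral_indicator_one (μ := volume.restrict (Set.Ioi (0:ℝ))) hset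
    rw [this, h3, Measure.restrict_apply hset, slice_vol]
  calc ∫⁻ t in Set.Ioi (0:ℝ), μ {x | ENNReal.ofReal t < f x}
      = ∫⁻ t in Set.Ioi (0:ℝ), ∫⁻ x, S.indicator (fun _ => (1:ℝ≥0∞)) (t, x) ∂μ := by
        simp_rw [h1]
    _ = ∫⁻ x, (∫⁻ t in Set.Ioi (0:ℝ), S.indicator (fun _ => (1:ℝ≥0∞)) (t, x)) ∂μ := swap
    _ = ∫⁻ x, f x ∂μ := by simp_rw [h2]

section Aux
variable {n₁ n₂ : ℕ} {ω₁ : ℤ → Rn n₁} {ω₂ : ℤ → Rn n₂}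

lemma Cube.measurableSet_toSet {n : ℕ} (I : Cube n) : MeasurableSet I.toSet := by
  have h : I.toSet = Set.pi Set.univ (fun i => Set.Ico (I.corner i) (I.corner i + I.len)) := by
    ext x; simp [Cube.toSet, Set.mem_pi]
  rw [h]
  exact MeasurableSet.univ_pi fun i => measurableSet_Ico

lemma IsBiGridRect.measurableSet {R : Set (Rnn n₁ n₂)} (h : IsBiGridRect ω₁ ω₂ R) :
    MeasurableSet R := by
  obtain ⟨I, J, -, -, rfl⟩ := h
  exact I.measurableSet_toSet.prod J.measurableSet_toSet

instance instCountableBiGrid : Countable {R : Set (Rnn n₁ n₂) // IsBiGridRect ω₁ ω₂ R} := by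
  have hsurj : Function.Surjective
      (fun p : (ℤ × (Fin n₁ → ℤ)) × (ℤ × (Fin n₂ → ℤ)) =>
        (⟨(gridCube n₁ ω₁ p.1.1 p.1.2).toSet ×ˢ (gridCube n₂ ω₂ p.2.1 p.2.2).toSet,
          (gridCube n₁ ω₁ p.1.1 p.1.2), (gridCube n₂ ω₂ p.2.1 p.2.2),
          ⟨p.1.1, p.1.2, rfl⟩, ⟨p.2.1, p.2.2, rfl⟩, rfl⟩ :
          {R : Set (Rnn n₁ n₂) // IsBiGridRect ω₁ ω₂ R})) := by
    rintro ⟨R, I, J, ⟨k₁, m₁, rfl⟩, ⟨k₂, m₂, rfl⟩, rfl⟩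
    exact ⟨((k₁, m₁), (k₂, m₂)), rfl⟩
  exact hsurj.countable

end Aux

/-- bi-parameter dyadic Carleson embedding theorem, with the
constant preserved in both directions. -/
theorem carleson_embedding
    (n₁ n₂ : ℕ) (hn₁ : 1 ≤ n₁) (hn₂ : 1 ≤ n₂)
    (ω₁ : ℤ → Rn n₁) (ω₂ : ℤ → Rn n₂) (hω₁ : IsGridParam ω₁) (hω₂ : IsGridParam ω₂)
    (lam : Set (Rnn n₁ n₂) → ℝ≥0) (C : ℝ≥0∞) (hC : C ≠ ⊤) :
    (∀ U : Set (Rnn n₁ n₂), MeasurableSet U →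
        (∑' R : {R : Set (Rnn n₁ n₂) // IsBiGridRect ω₁ ω₂ R ∧ R ⊆ U},
          (lam R.1 : ℝ≥0∞)) ≤ C * volume U) ↔
      (∀ a : Set (Rnn n₁ n₂) → ℝ≥0,
        (∑' R : {R : Set (Rnn n₁ n₂) // IsBiGridRect ω₁ ω₂ R},
          (lam R.1 : ℝ≥0∞) * (a R.1 : ℝ≥0∞)) ≤
          C * ∫⁻ x, ⨆ (R : Set (Rnn n₁ n₂)) (_ : IsBiGridRect ω₁ ω₂ R) (_ : x ∈ R),
            (a R : ℝ≥0∞)) := by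
  
  constructor
  · intro h1 a
    set M : Rnn n₁ n₂ → ℝ≥0∞ := fun x =>
      ⨆ (R : Set (Rnn n₁ n₂)) (_ : IsBiGridRect ω₁ ω₂ R) (_ : x ∈ R), (a R : ℝ≥0∞) with hM
    -- M as a countable sup
    have hMx : ∀ x, M x = ⨆ R : {R : Set (Rnn n₁ n₂) // IsBiGridRect ω₁ ω₂ R},
        Set.indicator R.1 (fun _ => ((a R.1 : ℝ≥0∞))) x := by
      intro x
      apply le_antisymm
      · refine iSup_le fun R => iSup_le fun hR => iSup_le fun hx => ?_
        refine le_trans ?_ (le_iSup _ (⟨R, hR⟩ : {R : Set (Rnn n₁ n₂) // IsBiGridRect ω₁ ω₂ R}))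
        rw [Set.indicator_of_mem hx]
      · refine iSup_le fun R => ?_
        by_cases hx : x ∈ R.1
        · rw [Set.indicator_of_mem hx]
          exact le_iSup_of_le R.1 (le_iSup_of_le R.2 (le_iSup_of_le hx le_rfl))
        · simp [Set.indicator_of_notMem hx]
    have hMmeas : Measurable M := by
      have : M = fun x => ⨆ R : {R : Set (Rnn n₁ n₂) // IsBiGridRect ω₁ ω₂ R},
          Set.indicator R.1 (fun _ => ((a R.1 : ℝ≥0∞))) x := funext hMx
      rw [this]
      exact Measurable.iSup fun R => measurable_const.indicator R.2.measurableSet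
    -- the layer functions
    have step1 : ∀ R : {R : Set (Rnn n₁ n₂) // IsBiGridRect ω₁ ω₂ R},
        (lam R.1 : ℝ≥0∞) * (a R.1 : ℝ≥0∞)
          = ∫⁻ t in Set.Ioi (0:ℝ),
              Set.indicator (Set.Iio ((a R.1 : ℝ))) (fun _ => (lam R.1 : ℝ≥0∞)) t := by
      intro R
      rw [lintegral_indicator measurableSet_Iio, setLIntegral_const,
        Measure.restrict_apply measurableSet_Iio]
      have h2 : Set.Iio ((a R.1 : ℝ)) ∩ Set.Ioi 0 = Set.Ioo 0 ((a R.1 : ℝ)) := by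
        rw [Set.inter_comm, Set.Ioi_inter_Iio]
      rw [h2, Real.volume_Ioo]
      simp
    rw [tsum_congr step1, ← lintegral_tsum (fun R => (measurable_const.indicator
        measurableSet_Iio).aemeasurable)]
    -- pointwise bound for t > 0
    have key : ∀ t : ℝ, t ∈ Set.Ioi (0:ℝ) →
        (∑' R : {R : Set (Rnn n₁ n₂) // IsBiGridRect ω₁ ω₂ R},
          Set.indicator (Set.Iio ((a R.1 : ℝ))) (fun _ => (lam R.1 : ℝ≥0∞)) t)
        ≤ C * volume {x | ENNReal.ofReal t < M x} := by
      intro t ht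
      set Ut : Set (Rnn n₁ n₂) :=
        ⋃ R : {R : Set (Rnn n₁ n₂) // IsBiGridRect ω₁ ω₂ R},
          if t < (a R.1 : ℝ) then R.1 else ∅ with hUt
      have hUtm : MeasurableSet Ut := by
        refine MeasurableSet.iUnion fun R => ?_
        split_ifs
        · exact R.2.measurableSet
        · exact MeasurableSet.empty
      have hsub : ∀ R : {R : Set (Rnn n₁ n₂) // IsBiGridRect ω₁ ω₂ R},
          t < (a R.1 : ℝ) → R.1 ⊆ Ut := by
        intro R hR
        refine Set.subset_iUnion_of_subset R ?_
        rw [if_pos hR]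
      -- compare sums
      have hcmp : (∑' R : {R : Set (Rnn n₁ n₂) // IsBiGridRect ω₁ ω₂ R},
            Set.indicator (Set.Iio ((a R.1 : ℝ))) (fun _ => (lam R.1 : ℝ≥0∞)) t)
          ≤ ∑' R : {R : Set (Rnn n₁ n₂) // IsBiGridRect ω₁ ω₂ R ∧ R ⊆ Ut}, (lam R.1 : ℝ≥0∞) := by
        have e1 : (∑' R : {R : Set (Rnn n₁ n₂) // IsBiGridRect ω₁ ω₂ R},
              Set.indicator (Set.Iio ((a R.1 : ℝ))) (fun _ => (lam R.1 : ℝ≥0∞)) t)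
            = ∑' R : Set (Rnn n₁ n₂), Set.indicator {R | IsBiGridRect ω₁ ω₂ R}
                (fun R => Set.indicator (Set.Iio ((a R : ℝ))) (fun _ => (lam R : ℝ≥0∞)) t) R :=
          tsum_subtype {R : Set (Rnn n₁ n₂) | IsBiGridRect ω₁ ω₂ R}
            (fun R => Set.indicator (Set.Iio ((a R : ℝ))) (fun _ => (lam R : ℝ≥0∞)) t)
        have e2 : (∑' R : {R : Set (Rnn n₁ n₂) // IsBiGridRect ω₁ ω₂ R ∧ R ⊆ Ut},
              (lam R.1 : ℝ≥0∞))
            = ∑' R : Set (Rnn n₁ n₂), Set.indicator {R | IsBiGridRect ω₁ ω₂ R ∧ R ⊆ Ut}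
                (fun R => (lam R : ℝ≥0∞)) R :=
          tsum_subtype {R : Set (Rnn n₁ n₂) | IsBiGridRect ω₁ ω₂ R ∧ R ⊆ Ut}
            (fun R => (lam R : ℝ≥0∞))
        rw [e1, e2]
        refine ENNReal.tsum_le_tsum fun R => ?_
        by_cases hP : IsBiGridRect ω₁ ω₂ R
        · have hm1 : R ∈ {R : Set (Rnn n₁ n₂) | IsBiGridRect ω₁ ω₂ R} := hP
          rw [Set.indicator_of_mem hm1]
          by_cases hta : t < (a R : ℝ)
          · have hm2 : R ∈ {R : Set (Rnn n₁ n₂) | IsBiGridRect ω₁ ω₂ R ∧ R ⊆ Ut} :=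
              ⟨hP, hsub ⟨R, hP⟩ hta⟩
            rw [Set.indicator_of_mem (show t ∈ Set.Iio ((a R : ℝ)) from hta),
              Set.indicator_of_mem hm2]
          · rw [Set.indicator_of_notMem (show t ∉ Set.Iio ((a R : ℝ)) from hta)]
            exact zero_le
        · have hn1 : R ∉ {R : Set (Rnn n₁ n₂) | IsBiGridRect ω₁ ω₂ R} := hP
          rw [Set.indicator_of_notMem hn1]
          exact zero_le
      -- Ut is contained in the superlevel set
      have hUle : volume Ut ≤ volume {x | ENNReal.ofReal t < M x} := by
        refine measure_mono fun x hx => ?_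
        obtain ⟨s, ⟨R, rfl⟩, hxs⟩ := hx
        by_cases hta : t < (a R.1 : ℝ)
        · have hxs' : x ∈ R.1 := by simpa [hta] using hxs
          have h3 : ENNReal.ofReal t < (a R.1 : ℝ≥0∞) := by
            rw [← ENNReal.ofReal_coe_nnreal]
            exact (ENNReal.ofReal_lt_ofReal_iff (lt_trans ht hta)).mpr hta
          show ENNReal.ofReal t < M x
          rw [hMx x]
          refine lt_of_lt_of_le h3 (le_iSup_of_le R ?_)
          rw [Set.indicator_of_mem hxs']
        · simp [hta] at hxs
      calc (∑' R : {R : Set (Rnn n₁ n₂) // IsBiGridRect ω₁ ω₂ R},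
            Set.indicator (Set.Iio ((a R.1 : ℝ))) (fun _ => (lam R.1 : ℝ≥0∞)) t)
          ≤ ∑' R : {R : Set (Rnn n₁ n₂) // IsBiGridRect ω₁ ω₂ R ∧ R ⊆ Ut}, (lam R.1 : ℝ≥0∞) :=
            hcmp
        _ ≤ C * volume Ut := h1 Ut hUtm
        _ ≤ C * volume {x | ENNReal.ofReal t < M x} := mul_le_mul_right hUle C
    calc (∫⁻ t in Set.Ioi (0:ℝ), ∑' R : {R : Set (Rnn n₁ n₂) // IsBiGridRect ω₁ ω₂ R},
          Set.indicator (Set.Iio ((a R.1 : ℝ))) (fun _ => (lam R.1 : ℝ≥0∞)) t)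
        ≤ ∫⁻ t in Set.Ioi (0:ℝ), C * volume {x | ENNReal.ofReal t < M x} := by
          refine lintegral_mono_ae ?_
          rw [ae_restrict_iff' measurableSet_Ioi]
          exact ae_of_all _ key
      _ = C * ∫⁻ t in Set.Ioi (0:ℝ), volume {x | ENNReal.ofReal t < M x} :=
          lintegral_const_mul' C _ hC
      _ = C * ∫⁻ x, M x := by rw [layercake_ennreal volume M hMmeas]
  · intro h2 U hU
    set a : Set (Rnn n₁ n₂) → ℝ≥0 :=
      Set.indicator {R | IsBiGridRect ω₁ ω₂ R ∧ R ⊆ U} (fun _ => 1) with ha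
    have hsum : (∑' R : {R : Set (Rnn n₁ n₂) // IsBiGridRect ω₁ ω₂ R ∧ R ⊆ U}, (lam R.1 : ℝ≥0∞))
        = ∑' R : {R : Set (Rnn n₁ n₂) // IsBiGridRect ω₁ ω₂ R},
            (lam R.1 : ℝ≥0∞) * (a R.1 : ℝ≥0∞) := by
      have e1 : (∑' R : {R : Set (Rnn n₁ n₂) // IsBiGridRect ω₁ ω₂ R ∧ R ⊆ U}, (lam R.1 : ℝ≥0∞))
          = ∑' R : Set (Rnn n₁ n₂),
              Set.indicator {R | IsBiGridRect ω₁ ω₂ R ∧ R ⊆ U} (fun R => (lam R : ℝ≥0∞)) R :=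
        tsum_subtype {R : Set (Rnn n₁ n₂) | IsBiGridRect ω₁ ω₂ R ∧ R ⊆ U} (fun R => (lam R : ℝ≥0∞))
      have e2 : (∑' R : {R : Set (Rnn n₁ n₂) // IsBiGridRect ω₁ ω₂ R},
            (lam R.1 : ℝ≥0∞) * (a R.1 : ℝ≥0∞))
          = ∑' R : Set (Rnn n₁ n₂),
              Set.indicator {R | IsBiGridRect ω₁ ω₂ R}
                (fun R => (lam R : ℝ≥0∞) * (a R : ℝ≥0∞)) R :=
        tsum_subtype {R : Set (Rnn n₁ n₂) | IsBiGridRect ω₁ ω₂ R}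
          (fun R => (lam R : ℝ≥0∞) * (a R : ℝ≥0∞))
      rw [e1, e2]
      apply tsum_congr
      intro R
      by_cases h : IsBiGridRect ω₁ ω₂ R ∧ R ⊆ U
      · have hm : R ∈ {R : Set (Rnn n₁ n₂) | IsBiGridRect ω₁ ω₂ R ∧ R ⊆ U} := h
        have hm1 : R ∈ {R : Set (Rnn n₁ n₂) | IsBiGridRect ω₁ ω₂ R} := h.1
        rw [Set.indicator_of_mem hm, Set.indicator_of_mem hm1, ha, Set.indicator_of_mem hm]
        simp
      · have hn : R ∉ {R : Set (Rnn n₁ n₂) | IsBiGridRect ω₁ ω₂ R ∧ R ⊆ U} := h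
        rw [Set.indicator_of_notMem hn]
        by_cases h1 : IsBiGridRect ω₁ ω₂ R
        · have hm1 : R ∈ {R : Set (Rnn n₁ n₂) | IsBiGridRect ω₁ ω₂ R} := h1
          rw [Set.indicator_of_mem hm1, ha, Set.indicator_of_notMem hn]
          simp
        · have hn1 : R ∉ {R : Set (Rnn n₁ n₂) | IsBiGridRect ω₁ ω₂ R} := h1
          rw [Set.indicator_of_notMem hn1]
    have hint : (∫⁻ x, ⨆ (R : Set (Rnn n₁ n₂)) (_ : IsBiGridRect ω₁ ω₂ R) (_ : x ∈ R),
        (a R : ℝ≥0∞)) ≤ volume U := by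
      have hle : ∀ x, (⨆ (R : Set (Rnn n₁ n₂)) (_ : IsBiGridRect ω₁ ω₂ R) (_ : x ∈ R),
          (a R : ℝ≥0∞)) ≤ Set.indicator U (fun _ => 1) x := by
        intro x
        refine iSup_le fun R => iSup_le fun hR => iSup_le fun hx => ?_
        by_cases hRU : R ⊆ U
        · have h1 : a R = 1 := Set.indicator_of_mem (show R ∈ {R | IsBiGridRect ω₁ ω₂ R ∧ R ⊆ U} from ⟨hR, hRU⟩) _
          rw [h1, Set.indicator_of_mem (hRU hx)]
          simp
        · have h1 : a R = 0 := Set.indicator_of_notMem (fun hm => hRU hm.2) _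
          simp [h1]
      calc (∫⁻ x, ⨆ (R : Set (Rnn n₁ n₂)) (_ : IsBiGridRect ω₁ ω₂ R) (_ : x ∈ R), (a R : ℝ≥0∞))
          ≤ ∫⁻ x, Set.indicator U (fun _ => 1) x := lintegral_mono hle
        _ = volume U := by exact lintegral_indicator_one hU
    exact hsum ▸ ((h2 a).trans (mul_le_mul_right hint C))
end
end
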